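/- Let Z and Y be measurable spaces, let σ be a probability measure on Z, let ν and ρ be probability measures on Y with ρ ≪ ν and dρ/dν ≤ M ν-almost everywhere for some M < ∞, and let λ be a probability measure on Z×Y whose second (Y-)marginal equals ρ. Then KL(λ | σ⊗ν) = KL(λ | σ⊗ρ) + KL(ρ | ν), as an identity in [0,∞]; in particular KL(ρ|ν) is finite and KL(λ | σ⊗ν) is finite if and only if KL(λ | σ⊗ρ) is finite. -/

import Mathlib

open MeasureTheory Set Filter
open scoped ENNReal Classical

noncomputable section

/-- Kullback–Leibler divergence via `φ(s) = s log s − s + 1`. -/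
def KLphi (s : ℝ) : ℝ := s * Real.log s - s + 1

noncomputable def KL {A : Type*} [MeasurableSpace A] (α β : Measure A) : ℝ≥0∞ :=
  if α ≪ β then ∫⁻ x, ENNReal.ofReal (KLphi ((α.rnDeriv β x).toReal)) ∂β else ⊤

/-- Product of two measures. -/
noncomputable def prodM {A B : Type*} [MeasurableSpace A] [MeasurableSpace B]
    (α : Measure A) (β : Measure B) : Measure (A × B) :=
  α.bind fun a => β.map (Prod.mk a)


section Helpers

lemma KLphi_nonneg {s : ℝ} (hs : 0 ≤ s) : 0 ≤ KLphi s := by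
  rcases eq_or_lt_of_le hs with h | h
  · simp [KLphi, ← h]
  · have := Real.log_le_sub_one_of_pos (show (0:ℝ) < s⁻¹ by positivity)
    rw [Real.log_inv] at this
    unfold KLphi
    have h2 : -Real.log s * s ≤ (s⁻¹ - 1) * s := by nlinarith
    rw [sub_mul, inv_mul_cancel₀ h.ne'] at h2
    nlinarith

lemma KLphi_mul {s t : ℝ} (hs : 0 ≤ s) (ht : 0 ≤ t) :
    KLphi (s * t) = t * KLphi s + s * t * Real.log t + (1 - t) := by
  rcases eq_or_lt_of_le hs with h | h
  · subst h; simp [KLphi]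
  rcases eq_or_lt_of_le ht with h' | h'
  · simp [KLphi, ← h']
  · unfold KLphi
    rw [Real.log_mul h.ne' h'.ne']
    ring

lemma abs_mul_log_le {t M : ℝ} (ht0 : 0 ≤ t) (htM : t ≤ M) : |t * Real.log t| ≤ 1 + M^2 := by
  rcases eq_or_lt_of_le ht0 with h | h
  · rw [← h]; simp; nlinarith
  · rw [abs_le]
    constructor
    · have := Real.log_le_sub_one_of_pos (show (0:ℝ) < t⁻¹ by positivity)
      rw [Real.log_inv] at this
      have h2 : -Real.log t * t ≤ (t⁻¹ - 1) * t := by nlinarith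
      rw [sub_mul, inv_mul_cancel₀ h.ne'] at h2
      nlinarith
    · have := Real.log_le_sub_one_of_pos h
      nlinarith

lemma abs_KLphi_le {t M : ℝ} (ht0 : 0 ≤ t) (htM : t ≤ M) : |KLphi t| ≤ 2 + M^2 + M := by
  have h1 := abs_mul_log_le ht0 htM
  unfold KLphi
  have : |t * Real.log t - t + 1| ≤ |t * Real.log t| + |t| + 1 := by
    calc |t * Real.log t - t + 1| ≤ |t * Real.log t - t| + 1 := by
          simpa using abs_add_le (t * Real.log t - t) 1
      _ ≤ |t * Real.log t| + |t| + 1 := by simpa [add_le_add_iff_right] using abs_sub (t * Real.log t) t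
  rw [abs_of_nonneg ht0] at this
  nlinarith

lemma measurable_KLphi : Measurable KLphi := by
  unfold KLphi
  fun_prop

variable {Z Y : Type*} [MeasurableSpace Z] [MeasurableSpace Y]

lemma prod_withDensity_rep (σ : Measure Z) [IsProbabilityMeasure σ]
    (ν ρ : Measure Y) [IsProbabilityMeasure ν] [IsProbabilityMeasure ρ] (hac : ρ ≪ ν) :
    σ.prod ρ = (σ.prod ν).withDensity (fun p => ρ.rnDeriv ν p.2) := by
  have hg : Measurable (ρ.rnDeriv ν) := Measure.measurable_rnDeriv ρ ν
  have hG : Measurable (fun p : Z × Y => ρ.rnDeriv ν p.2) := hg.comp measurable_snd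
  refine Measure.prod_eq (fun s t hs ht => ?_)
  rw [withDensity_apply _ (hs.prod ht), ← Measure.prod_restrict,
    lintegral_prod _ hG.aemeasurable]
  simp only [lintegral_const, Measure.restrict_apply_univ]
  rw [Measure.setLIntegral_rnDeriv hac t, mul_comm]

lemma prod_snd_null (σ : Measure Z) [IsProbabilityMeasure σ]
    (ν : Measure Y) [IsProbabilityMeasure ν] {N : Set Y} (hN : MeasurableSet N)
    (h0 : ν N = 0) : (σ.prod ν) (Prod.snd ⁻¹' N) = 0 := by
  rw [← Measure.map_apply measurable_snd hN, Measure.map_snd_prod]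
  simp [h0]

lemma rho_g_zero (ν ρ : Measure Y) [IsProbabilityMeasure ν] [IsProbabilityMeasure ρ]
    (hac : ρ ≪ ν) : ρ {y | ρ.rnDeriv ν y = 0} = 0 := by
  have hg : Measurable (ρ.rnDeriv ν) := Measure.measurable_rnDeriv ρ ν
  have hm : MeasurableSet {y | ρ.rnDeriv ν y = 0} := hg (measurableSet_singleton 0)
  set S := {y | ρ.rnDeriv ν y = 0} with hS
  nth_rewrite 1 [← Measure.withDensity_rnDeriv_eq ρ ν hac]
  rw [withDensity_apply _ hm]
  rw [setLIntegral_congr_fun (f := ρ.rnDeriv ν) (g := fun _ => 0) hm (fun y hy => hy)]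
  simp

lemma lam_ac_of (σ : Measure Z) [IsProbabilityMeasure σ]
    (ν ρ : Measure Y) [IsProbabilityMeasure ν] [IsProbabilityMeasure ρ] (hac : ρ ≪ ν)
    (lam : Measure (Z × Y)) [IsProbabilityMeasure lam] (hl : lam.map Prod.snd = ρ)
    (hlm : lam ≪ σ.prod ν) : lam ≪ σ.prod ρ := by
  have hg : Measurable (ρ.rnDeriv ν) := Measure.measurable_rnDeriv ρ ν
  have hG : Measurable (fun p : Z × Y => ρ.rnDeriv ν p.2) := hg.comp measurable_snd
  have hGm : MeasurableSet {p : Z × Y | ρ.rnDeriv ν p.2 ≠ 0} :=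
    (hG (measurableSet_singleton 0)).compl
  rw [prod_withDensity_rep σ ν ρ hac]
  refine Measure.AbsolutelyContinuous.mk (fun s hs h0 => ?_)
  rw [withDensity_apply _ hs] at h0
  have hae : (fun p : Z × Y => ρ.rnDeriv ν p.2) =ᵐ[(σ.prod ν).restrict s] 0 :=
    (lintegral_eq_zero_iff hG).mp h0
  have h1 : (σ.prod ν) ({p : Z × Y | ρ.rnDeriv ν p.2 ≠ 0} ∩ s) = 0 := by
    have h := ae_iff.mp hae
    simp only [Pi.zero_apply] at h
    rw [Measure.restrict_apply hGm] at h
    exact h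
  have h2 : lam ({p : Z × Y | ρ.rnDeriv ν p.2 ≠ 0} ∩ s) = 0 := hlm h1
  have h3 : lam {p : Z × Y | ρ.rnDeriv ν p.2 = 0} = 0 := by
    have hm : MeasurableSet {y | ρ.rnDeriv ν y = 0} := hg (measurableSet_singleton 0)
    have he : {p : Z × Y | ρ.rnDeriv ν p.2 = 0} = Prod.snd ⁻¹' {y | ρ.rnDeriv ν y = 0} := rfl
    rw [he, ← Measure.map_apply measurable_snd hm, hl]
    exact rho_g_zero ν ρ hac
  have hle : lam s ≤ lam ({p : Z × Y | ρ.rnDeriv ν p.2 ≠ 0} ∩ s)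
      + lam {p : Z × Y | ρ.rnDeriv ν p.2 = 0} := by
    calc lam s ≤ lam (({p : Z × Y | ρ.rnDeriv ν p.2 ≠ 0} ∩ s)
        ∪ {p : Z × Y | ρ.rnDeriv ν p.2 = 0}) := by
          apply measure_mono
          intro p hp
          by_cases hp0 : ρ.rnDeriv ν p.2 = 0
          · exact Or.inr hp0
          · exact Or.inl ⟨hp0, hp⟩
      _ ≤ _ := measure_union_le _ _
  rw [h2, h3, add_zero] at hle
  exact le_zero_iff.mp hle

theorem stmt9' {Z Y : Type*} [MeasurableSpace Z] [MeasurableSpace Y]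
    (σ : Measure Z) [IsProbabilityMeasure σ]
    (ν ρ : Measure Y) [IsProbabilityMeasure ν] [IsProbabilityMeasure ρ]
    (hac : ρ ≪ ν) (M : ℝ) (hM : ∀ᵐ y ∂ν, ρ.rnDeriv ν y ≤ ENNReal.ofReal M)
    (lam : Measure (Z × Y)) [IsProbabilityMeasure lam] (hl : lam.map Prod.snd = ρ) :
    KL lam (σ.prod ν) = KL lam (σ.prod ρ) + KL ρ ν ∧ KL ρ ν ≠ ⊤ := by
  set μ := σ.prod ν with hμdef
  set π := σ.prod ρ with hπdef
  have hg : Measurable (ρ.rnDeriv ν) := Measure.measurable_rnDeriv ρ ν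
  have hG : Measurable (fun p : Z × Y => ρ.rnDeriv ν p.2) := hg.comp measurable_snd
  have hrep : π = μ.withDensity (fun p => ρ.rnDeriv ν p.2) := prod_withDensity_rep σ ν ρ hac
  -- M ≥ 1
  have hint_g : ∫⁻ y, ρ.rnDeriv ν y ∂ν = 1 := by
    rw [← setLIntegral_univ, Measure.setLIntegral_rnDeriv hac]; simp
  have hM1 : (1:ℝ≥0∞) ≤ ENNReal.ofReal M := by
    calc (1:ℝ≥0∞) = ∫⁻ y, ρ.rnDeriv ν y ∂ν := hint_g.symm
      _ ≤ ∫⁻ _, ENNReal.ofReal M ∂ν := lintegral_mono_ae (hM.mono fun y hy => hy)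
      _ = ENNReal.ofReal M := by simp
  have hM0 : (0:ℝ) ≤ M := by
    by_contra h
    rw [ENNReal.ofReal_eq_zero.mpr (le_of_lt (not_le.mp h))] at hM1
    simp at hM1
  -- toReal bound for g
  have hgBr : ∀ᵐ y ∂ν, (ρ.rnDeriv ν y).toReal ≤ M := by
    filter_upwards [hM] with y hy
    calc (ρ.rnDeriv ν y).toReal ≤ (ENNReal.ofReal M).toReal :=
          ENNReal.toReal_mono ENNReal.ofReal_ne_top hy
      _ = M := ENNReal.toReal_ofReal hM0
  -- integrability of φ(g.toReal) and g.toReal * log g.toReal over ν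
  have hmeas_phig : Measurable (fun y => KLphi ((ρ.rnDeriv ν y).toReal)) :=
    measurable_KLphi.comp hg.ennreal_toReal
  have hint_phig : Integrable (fun y => KLphi ((ρ.rnDeriv ν y).toReal)) ν := by
    refine Integrable.mono' (integrable_const (2 + M^2 + M)) hmeas_phig.aestronglyMeasurable ?_
    filter_upwards [hgBr] with y hy
    rw [Real.norm_eq_abs]
    exact abs_KLphi_le ENNReal.toReal_nonneg hy
  have hint_glog : Integrable
      (fun y => (ρ.rnDeriv ν y).toReal * Real.log ((ρ.rnDeriv ν y).toReal)) ν := by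
    refine Integrable.mono' (integrable_const (1 + M^2))
      ((hg.ennreal_toReal.mul (Real.measurable_log.comp hg.ennreal_toReal)).aestronglyMeasurable) ?_
    filter_upwards [hgBr] with y hy
    rw [Real.norm_eq_abs]
    exact abs_mul_log_le ENNReal.toReal_nonneg hy
  have hint_gt : Integrable (fun y => (ρ.rnDeriv ν y).toReal) ν :=
    Measure.integrable_toReal_rnDeriv
  have hintegral_gt : ∫ y, (ρ.rnDeriv ν y).toReal ∂ν = 1 := by
    rw [Measure.integral_toReal_rnDeriv hac]; simp
  -- value of KL ρ ν
  have hphig_nonneg : ∀ y, 0 ≤ KLphi ((ρ.rnDeriv ν y).toReal) :=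
    fun y => KLphi_nonneg ENNReal.toReal_nonneg
  have hCval : KL ρ ν = ENNReal.ofReal (∫ y, KLphi ((ρ.rnDeriv ν y).toReal) ∂ν) := by
    rw [KL, if_pos hac, ← ofReal_integral_eq_lintegral_ofReal hint_phig
      (ae_of_all _ hphig_nonneg)]
  have hCne : KL ρ ν ≠ ⊤ := by rw [hCval]; exact ENNReal.ofReal_ne_top
  -- cR = ∫ t log t
  have hcR : ∫ y, KLphi ((ρ.rnDeriv ν y).toReal) ∂ν
      = ∫ y, (ρ.rnDeriv ν y).toReal * Real.log ((ρ.rnDeriv ν y).toReal) ∂ν := by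
    unfold KLphi
    have hsub : Integrable (fun y =>
        (ρ.rnDeriv ν y).toReal * Real.log ((ρ.rnDeriv ν y).toReal)
          - (ρ.rnDeriv ν y).toReal) ν := hint_glog.sub hint_gt
    rw [integral_add hsub (integrable_const 1),
      integral_sub hint_glog hint_gt, hintegral_gt, integral_const]
    simp
  have hcR_nonneg : 0 ≤ ∫ y, KLphi ((ρ.rnDeriv ν y).toReal) ∂ν :=
    integral_nonneg hphig_nonneg
  refine ⟨?_, hCne⟩
  -- dichotomy on absolute continuity
  by_cases hlm : lam ≪ μ
  · -- main case
    have hlp : lam ≪ π := lam_ac_of σ ν ρ hac lam hl hlm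
    rw [KL, if_pos hlm, KL, if_pos hlp, hCval]
    have hf : Measurable (lam.rnDeriv π) := Measure.measurable_rnDeriv _ _
    have hD : Measurable (lam.rnDeriv μ) := Measure.measurable_rnDeriv _ _
    -- chain rule
    have hπμ : π.rnDeriv μ =ᵐ[μ] fun p => ρ.rnDeriv ν p.2 := by
      rw [hrep]; exact Measure.rnDeriv_withDensity μ hG
    have hchain : lam.rnDeriv π * π.rnDeriv μ =ᵐ[μ] lam.rnDeriv μ :=
      Measure.rnDeriv_mul_rnDeriv hlp
    have hDfG : lam.rnDeriv μ =ᵐ[μ] fun p => lam.rnDeriv π p * ρ.rnDeriv ν p.2 := by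
      filter_upwards [hπμ, hchain] with p h1 h2
      rw [← h2, Pi.mul_apply, h1]
    -- bound for G on μ
    have hGM : ∀ᵐ p ∂μ, ρ.rnDeriv ν p.2 ≤ ENNReal.ofReal M := by
      have hNm : MeasurableSet {y | ¬ ρ.rnDeriv ν y ≤ ENNReal.ofReal M} :=
        (measurableSet_le hg measurable_const).compl
      have h0 : ν {y | ¬ ρ.rnDeriv ν y ≤ ENNReal.ofReal M} = 0 := ae_iff.mp hM
      have := prod_snd_null σ ν hNm h0
      rw [ae_iff]
      exact this
    have hGt_le : ∀ᵐ p ∂μ, (ρ.rnDeriv ν p.2).toReal ≤ M := by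
      filter_upwards [hGM] with p hp
      calc (ρ.rnDeriv ν p.2).toReal ≤ (ENNReal.ofReal M).toReal :=
            ENNReal.toReal_mono ENNReal.ofReal_ne_top hp
        _ = M := ENNReal.toReal_ofReal hM0
    have hGne : ∀ᵐ p ∂μ, ρ.rnDeriv ν p.2 ≠ ⊤ := by
      filter_upwards [hGM] with p hp
      exact ne_top_of_le_ne_top ENNReal.ofReal_ne_top hp
    -- integrability of corr
    have hmeas_logG : Measurable (fun p : Z × Y => Real.log ((ρ.rnDeriv ν p.2).toReal)) :=
      (Real.measurable_log.comp hg.ennreal_toReal).comp measurable_snd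
    have hint_logg_rho : Integrable (fun y => Real.log ((ρ.rnDeriv ν y).toReal)) ρ := by
      rw [← integrable_rnDeriv_smul_iff hac]
      simp only [smul_eq_mul]
      exact hint_glog
    have hint_logG_lam : Integrable (fun p : Z × Y => Real.log ((ρ.rnDeriv ν p.2).toReal)) lam := by
      have := (integrable_map_measure
        (hl ▸ hint_logg_rho.aestronglyMeasurable : AEStronglyMeasurable
          (fun y => Real.log ((ρ.rnDeriv ν y).toReal)) (lam.map Prod.snd))
        measurable_snd.aemeasurable).mp (hl ▸ hint_logg_rho)
      exact this
    have hint_term1 : Integrable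
        (fun p => (lam.rnDeriv μ p).toReal * Real.log ((ρ.rnDeriv ν p.2).toReal)) μ := by
      have := (integrable_rnDeriv_smul_iff hlm).mpr hint_logG_lam
      simpa only [smul_eq_mul] using this
    have hint_Gt : Integrable (fun p : Z × Y => (ρ.rnDeriv ν p.2).toReal) μ := by
      refine Integrable.mono' (integrable_const M)
        (hg.ennreal_toReal.comp measurable_snd).aestronglyMeasurable ?_
      filter_upwards [hGt_le] with p hp
      rw [Real.norm_eq_abs, abs_of_nonneg ENNReal.toReal_nonneg]
      exact hp
    have hint_term2 : Integrable (fun p : Z × Y => 1 - (ρ.rnDeriv ν p.2).toReal) μ :=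
      (integrable_const 1).sub hint_Gt
    have hint_corr : Integrable (fun p => (lam.rnDeriv μ p).toReal
        * Real.log ((ρ.rnDeriv ν p.2).toReal) + (1 - (ρ.rnDeriv ν p.2).toReal)) μ :=
      hint_term1.add hint_term2
    -- value of ∫ corr
    have hval_term1 : ∫ p, (lam.rnDeriv μ p).toReal * Real.log ((ρ.rnDeriv ν p.2).toReal) ∂μ
        = ∫ y, (ρ.rnDeriv ν y).toReal * Real.log ((ρ.rnDeriv ν y).toReal) ∂ν := by
      have e1 : ∫ p, (lam.rnDeriv μ p).toReal * Real.log ((ρ.rnDeriv ν p.2).toReal) ∂μ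
          = ∫ p, Real.log ((ρ.rnDeriv ν p.2).toReal) ∂lam := by
        have := integral_rnDeriv_smul hlm
          (f := fun p : Z × Y => Real.log ((ρ.rnDeriv ν p.2).toReal))
        simpa only [smul_eq_mul] using this
      have e2 : ∫ p, Real.log ((ρ.rnDeriv ν p.2).toReal) ∂lam
          = ∫ y, Real.log ((ρ.rnDeriv ν y).toReal) ∂ρ := by
        rw [← hl]
        exact (integral_map measurable_snd.aemeasurable
          (hl ▸ hint_logg_rho.aestronglyMeasurable)).symm
      have e3 : ∫ y, Real.log ((ρ.rnDeriv ν y).toReal) ∂ρ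
          = ∫ y, (ρ.rnDeriv ν y).toReal * Real.log ((ρ.rnDeriv ν y).toReal) ∂ν := by
        have := integral_rnDeriv_smul hac
          (f := fun y => Real.log ((ρ.rnDeriv ν y).toReal))
        simp only [smul_eq_mul] at this
        exact this.symm
      rw [e1, e2, e3]
    have hval_Gt : ∫ p, (ρ.rnDeriv ν p.2).toReal ∂μ = 1 := by
      have hmap : μ.map Prod.snd = ν := by
        rw [hμdef, Measure.map_snd_prod, measure_univ, one_smul]
      have : ∫ p, (ρ.rnDeriv ν p.2).toReal ∂μ = ∫ y, (ρ.rnDeriv ν y).toReal ∂(μ.map Prod.snd) := by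
        rw [integral_map measurable_snd.aemeasurable
          (hmap ▸ hint_gt.aestronglyMeasurable)]
      rw [this, hmap, hintegral_gt]
    have hval_corr : ∫ p, ((lam.rnDeriv μ p).toReal
        * Real.log ((ρ.rnDeriv ν p.2).toReal) + (1 - (ρ.rnDeriv ν p.2).toReal)) ∂μ
        = ∫ y, KLphi ((ρ.rnDeriv ν y).toReal) ∂ν := by
      rw [integral_add hint_term1 hint_term2, hval_term1,
        integral_sub (integrable_const 1) hint_Gt, hval_Gt, integral_const]
      rw [hcR]
      simp
    -- B in μ-form
    have hFmeas : Measurable (fun p => ENNReal.ofReal (KLphi ((lam.rnDeriv π p).toReal))) :=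
      ENNReal.measurable_ofReal.comp (measurable_KLphi.comp hf.ennreal_toReal)
    have hB' : ∫⁻ x, ENNReal.ofReal (KLphi ((lam.rnDeriv π x).toReal)) ∂π
        = ∫⁻ p, ENNReal.ofReal ((ρ.rnDeriv ν p.2).toReal
            * KLphi ((lam.rnDeriv π p).toReal)) ∂μ := by
      rw [hrep]
      have hFm : Measurable fun x => ENNReal.ofReal
          (KLphi ((lam.rnDeriv (μ.withDensity fun p => ρ.rnDeriv ν p.2) x).toReal)) := by
        apply ENNReal.measurable_ofReal.comp
        exact measurable_KLphi.comp (Measure.measurable_rnDeriv _ _).ennreal_toReal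
      rw [lintegral_withDensity_eq_lintegral_mul μ hG hFm]
      refine lintegral_congr_ae ?_
      filter_upwards [hGne] with p hp
      rw [Pi.mul_apply, ENNReal.ofReal_mul ENNReal.toReal_nonneg,
        ENNReal.ofReal_toReal hp]
    rw [hB']
    have hpt : ∀ᵐ p ∂μ, KLphi ((lam.rnDeriv μ p).toReal)
        = (ρ.rnDeriv ν p.2).toReal * KLphi ((lam.rnDeriv π p).toReal)
          + ((lam.rnDeriv μ p).toReal * Real.log ((ρ.rnDeriv ν p.2).toReal)
            + (1 - (ρ.rnDeriv ν p.2).toReal)) := by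
      filter_upwards [hDfG] with p hp
      rw [hp, ENNReal.toReal_mul,
        KLphi_mul (ENNReal.toReal_nonneg) (ENNReal.toReal_nonneg)]
      ring
    have hb_nonneg : ∀ p, 0 ≤ (ρ.rnDeriv ν p.2).toReal * KLphi ((lam.rnDeriv π p).toReal) :=
      fun p => mul_nonneg ENNReal.toReal_nonneg (KLphi_nonneg ENNReal.toReal_nonneg)
    have hmeas_corr : Measurable (fun p => (lam.rnDeriv μ p).toReal
        * Real.log ((ρ.rnDeriv ν p.2).toReal) + (1 - (ρ.rnDeriv ν p.2).toReal)) :=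
      (hD.ennreal_toReal.mul hmeas_logG).add
        (measurable_const.sub (hg.ennreal_toReal.comp measurable_snd))
    have hmeas_Bfun : Measurable (fun p => ENNReal.ofReal
        ((ρ.rnDeriv ν p.2).toReal * KLphi ((lam.rnDeriv π p).toReal))) := by
      apply ENNReal.measurable_ofReal.comp
      exact (hg.ennreal_toReal.comp measurable_snd).mul (measurable_KLphi.comp hf.ennreal_toReal)
    have hmeas_Afun : Measurable (fun p => ENNReal.ofReal (KLphi ((lam.rnDeriv μ p).toReal))) := by
      apply ENNReal.measurable_ofReal.comp
      exact measurable_KLphi.comp hD.ennreal_toReal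
    have hcorrE : ∫⁻ p, ENNReal.ofReal |(lam.rnDeriv μ p).toReal
        * Real.log ((ρ.rnDeriv ν p.2).toReal) + (1 - (ρ.rnDeriv ν p.2).toReal)| ∂μ ≠ ⊤ := by
      have h1 : ∫⁻ p, ENNReal.ofReal |(lam.rnDeriv μ p).toReal
          * Real.log ((ρ.rnDeriv ν p.2).toReal) + (1 - (ρ.rnDeriv ν p.2).toReal)| ∂μ
          = ∫⁻ p, (‖(lam.rnDeriv μ p).toReal
          * Real.log ((ρ.rnDeriv ν p.2).toReal) + (1 - (ρ.rnDeriv ν p.2).toReal)‖₊ : ℝ≥0∞) ∂μ :=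
        lintegral_congr fun p => (Real.enorm_eq_ofReal_abs _).symm
      rw [h1]
      exact hint_corr.hasFiniteIntegral.ne
    have hA_le : ∫⁻ p, ENNReal.ofReal (KLphi ((lam.rnDeriv μ p).toReal)) ∂μ
        ≤ (∫⁻ p, ENNReal.ofReal ((ρ.rnDeriv ν p.2).toReal
            * KLphi ((lam.rnDeriv π p).toReal)) ∂μ)
          + ∫⁻ p, ENNReal.ofReal |(lam.rnDeriv μ p).toReal
            * Real.log ((ρ.rnDeriv ν p.2).toReal) + (1 - (ρ.rnDeriv ν p.2).toReal)| ∂μ := by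
      rw [← lintegral_add_left hmeas_Bfun]
      refine lintegral_mono_ae ?_
      filter_upwards [hpt] with p hp
      rw [hp, ← ENNReal.ofReal_add (hb_nonneg p) (abs_nonneg _)]
      exact ENNReal.ofReal_le_ofReal (by linarith [le_abs_self ((lam.rnDeriv μ p).toReal
        * Real.log ((ρ.rnDeriv ν p.2).toReal) + (1 - (ρ.rnDeriv ν p.2).toReal))])
    have hB_le : ∫⁻ p, ENNReal.ofReal ((ρ.rnDeriv ν p.2).toReal
            * KLphi ((lam.rnDeriv π p).toReal)) ∂μ
        ≤ (∫⁻ p, ENNReal.ofReal (KLphi ((lam.rnDeriv μ p).toReal)) ∂μ)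
          + ∫⁻ p, ENNReal.ofReal |(lam.rnDeriv μ p).toReal
            * Real.log ((ρ.rnDeriv ν p.2).toReal) + (1 - (ρ.rnDeriv ν p.2).toReal)| ∂μ := by
      rw [← lintegral_add_left hmeas_Afun]
      refine lintegral_mono_ae ?_
      filter_upwards [hpt] with p hp
      rw [← ENNReal.ofReal_add (KLphi_nonneg ENNReal.toReal_nonneg) (abs_nonneg _)]
      refine ENNReal.ofReal_le_ofReal ?_
      have := neg_abs_le ((lam.rnDeriv μ p).toReal
        * Real.log ((ρ.rnDeriv ν p.2).toReal) + (1 - (ρ.rnDeriv ν p.2).toReal))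
      linarith [hp]
    by_cases hIA : ∫⁻ p, ENNReal.ofReal (KLphi ((lam.rnDeriv μ p).toReal)) ∂μ = ⊤
    · have hIB : ∫⁻ p, ENNReal.ofReal ((ρ.rnDeriv ν p.2).toReal
          * KLphi ((lam.rnDeriv π p).toReal)) ∂μ = ⊤ := by
        by_contra hIB
        exact absurd (le_trans hIA.symm.le hA_le)
          (not_le.mpr (lt_top_iff_ne_top.mpr (ENNReal.add_ne_top.mpr ⟨hIB, hcorrE⟩)))
      rw [hIA, hIB]
      simp
    · have hIB : ∫⁻ p, ENNReal.ofReal ((ρ.rnDeriv ν p.2).toReal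
          * KLphi ((lam.rnDeriv π p).toReal)) ∂μ ≠ ⊤ :=
        ne_top_of_le_ne_top (ENNReal.add_ne_top.mpr ⟨hIA, hcorrE⟩) hB_le
      -- integrabilities
      have hint_A : Integrable (fun p => KLphi ((lam.rnDeriv μ p).toReal)) μ := by
        refine ⟨(measurable_KLphi.comp hD.ennreal_toReal).aestronglyMeasurable, ?_⟩
        show (∫⁻ p, (‖KLphi ((lam.rnDeriv μ p).toReal)‖₊ : ℝ≥0∞) ∂μ) < ⊤
        have h1 : ∫⁻ p, (‖KLphi ((lam.rnDeriv μ p).toReal)‖₊ : ℝ≥0∞) ∂μ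
            = ∫⁻ p, ENNReal.ofReal (KLphi ((lam.rnDeriv μ p).toReal)) ∂μ :=
          lintegral_congr fun p => Real.enorm_eq_ofReal (KLphi_nonneg ENNReal.toReal_nonneg)
        rw [h1]
        exact lt_top_iff_ne_top.mpr hIA
      have hint_B : Integrable (fun p => (ρ.rnDeriv ν p.2).toReal
          * KLphi ((lam.rnDeriv π p).toReal)) μ := by
        refine Integrable.congr (hint_A.sub hint_corr) ?_
        filter_upwards [hpt] with p hp
        simp only [Pi.sub_apply]
        rw [hp]; ring
      have hreal : ∫ p, KLphi ((lam.rnDeriv μ p).toReal) ∂μ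
          = (∫ p, (ρ.rnDeriv ν p.2).toReal * KLphi ((lam.rnDeriv π p).toReal) ∂μ)
            + ∫ p, ((lam.rnDeriv μ p).toReal * Real.log ((ρ.rnDeriv ν p.2).toReal)
              + (1 - (ρ.rnDeriv ν p.2).toReal)) ∂μ := by
        rw [← integral_add hint_B hint_corr]
        exact integral_congr_ae hpt
      rw [← ofReal_integral_eq_lintegral_ofReal hint_A (ae_of_all _ fun p =>
          KLphi_nonneg ENNReal.toReal_nonneg),
        ← ofReal_integral_eq_lintegral_ofReal hint_B (ae_of_all _ hb_nonneg),
        hreal, hval_corr,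
        ENNReal.ofReal_add (integral_nonneg hb_nonneg) hcR_nonneg]

  · have hlp : ¬ lam ≪ π := fun h => hlm (h.trans (hrep ▸ withDensity_absolutelyContinuous μ _))
    rw [KL, if_neg hlm, KL, if_neg hlp]
    simp

end Helpers

/-- the entropy splitting identity
`KL(λ | σ⊗ν) = KL(λ | σ⊗ρ) + KL(ρ | ν)` for a probability measure `λ` on `Z×Y` with
`Y`-marginal `ρ`, where `ρ ≪ ν` with bounded density; in particular `KL(ρ|ν)` is finite,
and `KL(λ|σ⊗ν)` is finite iff `KL(λ|σ⊗ρ)` is. -/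
theorem stmt9 {Z Y : Type*} [MeasurableSpace Z] [MeasurableSpace Y]
    (σ : Measure Z) [IsProbabilityMeasure σ]
    (ν ρ : Measure Y) [IsProbabilityMeasure ν] [IsProbabilityMeasure ρ]
    (hac : ρ ≪ ν) (M : ℝ) (hM : ∀ᵐ y ∂ν, ρ.rnDeriv ν y ≤ ENNReal.ofReal M)
    (lam : Measure (Z × Y)) [IsProbabilityMeasure lam] (hl : lam.map Prod.snd = ρ) :
    KL lam (prodM σ ν) = KL lam (prodM σ ρ) + KL ρ ν ∧
    KL ρ ν ≠ ⊤ ∧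
    (KL lam (prodM σ ν) ≠ ⊤ ↔ KL lam (prodM σ ρ) ≠ ⊤) := by
  have he1 : prodM σ ν = σ.prod ν := (Measure.prod_def σ ν).symm
  have he2 : prodM σ ρ = σ.prod ρ := (Measure.prod_def σ ρ).symm
  rw [he1, he2]
  obtain ⟨hmain, hCne⟩ := stmt9' σ ν ρ hac M hM lam hl
  refine ⟨hmain, hCne, ?_⟩
  rw [hmain, ne_eq, ENNReal.add_eq_top, not_or]
  exact ⟨fun h => h.1, fun h => ⟨h, hCne⟩⟩
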